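/- Let C, C′ ⊆ span{e₁} ⊆ ℝ^d (d ≥ 3) be nonempty compact subsets of the x₁-axis with C ∩ [p,q] = C′ ∩ [p,q] for some p < q (identifying the axis with ℝ). Let ρ be a multirotation associated with C. Then there exists a multirotation ρ′ associated with C′ such that ρ and ρ′ agree on π^{-1}([p,q]), where π is the orthogonal projection onto the x₁-axis. -/
import Mathlib


open Metric Set MeasureTheory
open scoped RealInnerProductSpace ENNReal NNReal

noncomputable section

abbrev Euc (d : ℕ) := EuclideanSpace ℝ (Fin d)

/-- Points of the ambient space having a unique nearest point in `A`. -/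
def unp {d : ℕ} (A : Set (Euc d)) : Set (Euc d) :=
  {x | ∃! a, a ∈ A ∧ dist x a = Metric.infDist x A}

/-- Federer's local reach `reach (A, a)`. -/
def reachAt {d : ℕ} (A : Set (Euc d)) (a : Euc d) : ℝ≥0∞ :=
  sSup {r : ℝ≥0∞ | ∀ x : Euc d, edist x a < r → x ∈ unp A}

/-- Federer's reach of a set. -/
def reach {d : ℕ} (A : Set (Euc d)) : ℝ≥0∞ := ⨅ a ∈ A, reachAt A a

/-- The tangent cone of `A` at `a`: `u` is a tangent vector iff `u = 0` or `u` is a limit of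
`r i • (x i - a)` with `x i ∈ A \ {a}`, `x i → a`, `r i > 0`. -/
def tanCone {d : ℕ} (A : Set (Euc d)) (a : Euc d) : Set (Euc d) :=
  {u | u = 0 ∨ ∃ (x : ℕ → Euc d) (r : ℕ → ℝ),
    (∀ n, x n ∈ A ∧ x n ≠ a) ∧
    Filter.Tendsto x Filter.atTop (nhds a) ∧
    (∀ n, 0 < r n) ∧
    Filter.Tendsto (fun n => r n • (x n - a)) Filter.atTop (nhds u)}

/-- The dimension of the tangent cone of `A` at `a`. -/
def tanDim {d : ℕ} (A : Set (Euc d)) (a : Euc d) : ℕ :=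
  Module.finrank ℝ (Submodule.span ℝ (tanCone A a))

/-- The set of points of `A` at which the tangent cone has dimension `k`. -/
def Tk {d : ℕ} (A : Set (Euc d)) (k : ℕ) : Set (Euc d) :=
  {x | x ∈ A ∧ tanDim A x = k}

/-- Whitney's fullness `Θ(σ) = vol_k(σ) / (diam σ)^k` of a set. -/
def fullness {d : ℕ} (k : ℕ) (s : Set (Euc d)) : ℝ :=
  (μH[(k : ℝ)] s).toReal / (Metric.diam s) ^ k

/-- The metric `ρ_k` on the Grassmannian of subspaces of `ℝ^d`. -/
def grassDist {d : ℕ} (U V : Submodule ℝ (Euc d)) : ℝ :=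
  max (sSup ((fun u => Metric.infDist u (V : Set (Euc d))) '' {u | u ∈ U ∧ ‖u‖ = 1}))
      (sSup ((fun v => Metric.infDist v (U : Set (Euc d))) '' {v | v ∈ V ∧ ‖v‖ = 1}))

/-- A 2-rotation: a rotation of `ℝ^d` acting in a 2-plane orthogonal to `e₁` and fixing
its orthogonal complement pointwise. -/
def IsTwoRotation {d : ℕ} (e1 : Euc d) (R : Euc d ≃ₗᵢ[ℝ] Euc d) : Prop :=
  ∃ T : Submodule ℝ (Euc d), Module.finrank ℝ T = 2 ∧ (∀ v ∈ T, ⟪v, e1⟫ = 0) ∧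
    (∀ v ∈ Tᗮ, R v = v) ∧ LinearEquiv.det R.toLinearEquiv = 1

/-- A multirotation associated with a compact set `C` on the `x₁`-axis (identified with `ℝ`
via `t ↦ t • e₁`): the identity above `C`, and a fixed 2-rotation above each connected
component of the complement of `C`. -/
def IsMultirotation {d : ℕ} (e1 : Euc d) (C : Set ℝ) (ρ : Euc d → Euc d) : Prop :=
  (∀ x : Euc d, ⟪x, e1⟫ ∈ C → ρ x = x) ∧
  ∀ t : ℝ, t ∉ C → ∃ R : Euc d ≃ₗᵢ[ℝ] Euc d, IsTwoRotation e1 R ∧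
    ∀ x : Euc d, ⟪x, e1⟫ ∈ connectedComponentIn Cᶜ t → ρ x = R x

theorem stmt14 {d : ℕ} (hd : 3 ≤ d) (e1 : Euc d)
    (he1 : e1 = EuclideanSpace.single (⟨0, by omega⟩ : Fin d) 1)
    (C C' : Set ℝ) (hC : IsCompact C) (hC' : IsCompact C')
    (hCne : C.Nonempty) (hC'ne : C'.Nonempty)
    (p q : ℝ) (hpq : p < q) (hcap : C ∩ Set.Icc p q = C' ∩ Set.Icc p q)
    (ρ : Euc d → Euc d) (hρ : IsMultirotation e1 C ρ) :
    ∃ ρ' : Euc d → Euc d, IsMultirotation e1 C' ρ' ∧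
      ∀ x : Euc d, ⟪x, e1⟫ ∈ Set.Icc p q → ρ x = ρ' x := by
  classical
  obtain ⟨t₀, ht₀⟩ : ∃ t, t ∉ C := by
    rcases Set.ne_univ_iff_exists_notMem C |>.mp hC.ne_univ with ⟨t, ht⟩
    exact ⟨t, ht⟩
  -- A fallback 2-rotation
  have hcapC : ∀ u ∈ Set.Icc p q, u ∉ C' → u ∉ C := by
    intro u hu hu' huC
    exact hu' (hcap ▸ Set.mem_inter huC hu).1
  have hcapC' : ∀ u ∈ Set.Icc p q, u ∉ C → u ∉ C' := by
    intro u hu hu' huC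
    exact hu' ((hcap ▸ (Set.mem_inter huC hu : u ∈ C' ∩ Set.Icc p q) : u ∈ C ∩ Set.Icc p q)).1
  let F : Set ℝ → (Euc d ≃ₗᵢ[ℝ] Euc d) := fun s =>
    if h : ∃ u, u ∈ s ∧ u ∈ Set.Icc p q ∧ u ∉ C then
      (hρ.2 h.choose h.choose_spec.2.2).choose
    else (hρ.2 t₀ ht₀).choose
  have hF2 : ∀ s : Set ℝ, IsTwoRotation e1 (F s) := by
    intro s
    by_cases h : ∃ u, u ∈ s ∧ u ∈ Set.Icc p q ∧ u ∉ C
    · simp only [F, dif_pos h]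
      exact (hρ.2 h.choose h.choose_spec.2.2).choose_spec.1
    · simp only [F, dif_neg h]
      exact (hρ.2 t₀ ht₀).choose_spec.1
  refine ⟨fun x => if ⟪x, e1⟫ ∈ C' then x else F (connectedComponentIn C'ᶜ ⟪x, e1⟫) x,
    ⟨fun x hx => if_pos hx, ?_⟩, ?_⟩
  · intro t ht
    refine ⟨F (connectedComponentIn C'ᶜ t), hF2 _, ?_⟩
    intro x hx
    have hxc : ⟪x, e1⟫ ∈ C'ᶜ := connectedComponentIn_subset _ _ hx
    have hcc : connectedComponentIn C'ᶜ ⟪x, e1⟫ = connectedComponentIn C'ᶜ t :=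
      (connectedComponentIn_eq hx).symm
    simp only [if_neg (by exact hxc), hcc]
  · intro x hx
    by_cases ht : ⟪x, e1⟫ ∈ C'
    · have htC : ⟪x, e1⟫ ∈ C := (hcap ▸ Set.mem_inter ht hx :
        ⟪x, e1⟫ ∈ C ∩ Set.Icc p q).1
      simp only [if_pos ht]
      exact hρ.1 x htC
    · have htC : ⟪x, e1⟫ ∉ C := hcapC _ hx ht
      simp only [if_neg ht]
      set t := ⟪x, e1⟫ with htdef
      have h : ∃ u, u ∈ connectedComponentIn C'ᶜ t ∧ u ∈ Set.Icc p q ∧ u ∉ C :=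
        ⟨t, mem_connectedComponentIn ht, hx, htC⟩
      simp only [F, dif_pos h]
      set s := h.choose with hsdef
      obtain ⟨hs1, hs2, hs3⟩ := h.choose_spec
      -- the connected set `λ' ∩ Icc p q` links t and s inside Cᶜ
      have hSsub : connectedComponentIn C'ᶜ t ∩ Set.Icc p q ⊆ Cᶜ := by
        intro u ⟨hu1, hu2⟩
        exact hcapC _ hu2 (connectedComponentIn_subset _ _ hu1)
      have hSpre : IsPreconnected (connectedComponentIn C'ᶜ t ∩ Set.Icc p q) :=
        ((isPreconnected_connectedComponentIn).ordConnected.inter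
          Set.ordConnected_Icc).isPreconnected
      have htmem : t ∈ connectedComponentIn Cᶜ s := by
        have := hSpre.subset_connectedComponentIn (Set.mem_inter hs1 hs2) hSsub
        exact this (Set.mem_inter (mem_connectedComponentIn ht) hx)
      exact (hρ.2 s hs3).choose_spec.2 x htmem
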